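/- arXiv:1306.0821 — 2 statements merged into one kernel-verified Lean document; each statement's English description precedes it below -/
import Mathlib

section
/- Let F be an area-preserving random twist admitting a generalized generating function ℒ of complexity N, and set ℐ(q,ξ;ω) := ℒ(τ_q ω, 0, ξ₁−q, …, ξ_N−q). If (q̄, ξ̄) is a critical point of ℐ(·,·;ω), then the point (q̄, −𝒢_q(q̄, q̄; ξ̄, ω)) is a fixed point of F(·,·;ω), where 𝒢(q,Q;ξ,ω) := ℒ(τ_q ω, Q−q, ξ₁−q, …, ξ_N−q). -/
open MeasureTheory Set Filter
open scoped ENNReal Topology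

noncomputable section

/-- The strip `𝒮 = ℝ × [-1,1]`. -/
def Strip : Set (ℝ × ℝ) := Set.univ ×ˢ Set.Icc (-1 : ℝ) 1

/-- A probability space setup `(Ω, ℱ, ℙ, τ)`: a separable metric space `Ω` with its Borel
σ-algebra, a continuous `ℝ`-action `τ`, and a `τ`-invariant ergodic probability measure
which is positive on nonempty open sets. -/
structure RandomSetup (Ω : Type) [MetricSpace Ω] [MeasurableSpace Ω] [BorelSpace Ω] where
  separable : TopologicalSpace.SeparableSpace Ω
  P : Measure Ω
  prob : IsProbabilityMeasure P
  τ : ℝ → Ω → Ω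
  cont : Continuous fun z : ℝ × Ω => τ z.1 z.2
  map_zero : ∀ ω, τ 0 ω = ω
  map_add : ∀ a b ω, τ a (τ b ω) = τ (a + b) ω
  open_pos : ∀ U : Set Ω, IsOpen U → U.Nonempty → 0 < P U
  invariant : ∀ a : ℝ, MeasurePreserving (τ a) P P
  ergodic : ∀ A : Set Ω, MeasurableSet A → (∀ a : ℝ, τ a ⁻¹' A = A) → P A = 0 ∨ P A = 1

variable {Ω : Type} [MetricSpace Ω] [MeasurableSpace Ω] [BorelSpace Ω]

/-- The stationary lift `F(q,p;ω) = (q + Q̄(τ_q ω, p), P̄(τ_q ω, p))`. -/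
def liftF (S : RandomSetup Ω) (Qb Pb : Ω → ℝ → ℝ) (ω : Ω) (x : ℝ × ℝ) : ℝ × ℝ :=
  (x.1 + Qb (S.τ x.1 ω) x.2, Pb (S.τ x.1 ω) x.2)

/-- The Jacobian matrix `DF(x)` of a map of the strip (derivative within the strip). -/
def DFmat (F : ℝ × ℝ → ℝ × ℝ) (x : ℝ × ℝ) : Matrix (Fin 2) (Fin 2) ℝ :=
  !![(fderivWithin ℝ F Strip x (1, 0)).1, (fderivWithin ℝ F Strip x (0, 1)).1;
     (fderivWithin ℝ F Strip x (1, 0)).2, (fderivWithin ℝ F Strip x (0, 1)).2]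

/-- A real 2×2 matrix has both eigenvalues real and positive. -/
def HasPosEigen (M : Matrix (Fin 2) (Fin 2) ℝ) : Prop :=
  ∃ a b : ℝ, 0 < a ∧ 0 < b ∧ M.trace = a + b ∧ M.det = a * b

/-- A real 2×2 matrix has both eigenvalues real and negative. -/
def HasNegEigen (M : Matrix (Fin 2) (Fin 2) ℝ) : Prop :=
  ∃ a b : ℝ, a < 0 ∧ b < 0 ∧ M.trace = a + b ∧ M.det = a * b

/-- `F` is a C¹ diffeomorphism of the strip. -/
structure IsDiffeoStrip (F : ℝ × ℝ → ℝ × ℝ) : Prop where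
  smooth : ContDiffOn ℝ 1 F Strip
  bij : Set.BijOn F Strip Strip
  inv : ∃ G : ℝ × ℝ → ℝ × ℝ, Set.InvOn G F Strip Strip ∧ ContDiffOn ℝ 1 G Strip

/-- `F` is an area-preserving C¹ diffeomorphism of the strip. -/
structure IsAPDiffeoStrip (F : ℝ × ℝ → ℝ × ℝ) extends IsDiffeoStrip F : Prop where
  area : ∀ A : Set (ℝ × ℝ), A ⊆ Strip → MeasurableSet A → volume (F '' A) = volume A

/-- Area-preserving random twist map: (1) a.s. an area-preserving diffeomorphism of the
strip, (2) boundary invariance, (3) boundary twisting, (4) finite second moments. -/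
def IsAPRandomTwist (S : RandomSetup Ω) (Qb Pb : Ω → ℝ → ℝ) : Prop :=
  Measurable (fun z : Ω × ℝ => (Qb z.1 z.2, Pb z.1 z.2)) ∧
  (∃ C : ℝ≥0∞, C ≠ ⊤ ∧ ∀ p ∈ Set.Icc (-1 : ℝ) 1,
      (∫⁻ ω, ENNReal.ofReal (Qb ω p ^ 2 + Pb ω p ^ 2) ∂S.P) ≤ C) ∧
  (∀ᵐ ω ∂S.P,
    IsAPDiffeoStrip (liftF S Qb Pb ω) ∧
    (∀ q : ℝ, Pb (S.τ q ω) 1 = 1 ∧ Pb (S.τ q ω) (-1) = -1) ∧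
    StrictMono (fun q : ℝ => q + Qb (S.τ q ω) 1) ∧
    StrictMono (fun q : ℝ => q + Qb (S.τ q ω) (-1)) ∧
    0 < Qb ω 1 ∧ Qb ω (-1) < 0)

/-- Regularity: the derivatives of `F(·,·;ω)` and of its inverse are uniformly bounded
by a constant independent of `ω`, with probability one. -/
def IsRegularTwist (S : RandomSetup Ω) (Qb Pb : Ω → ℝ → ℝ) : Prop :=
  ∃ C : ℝ, ∀ᵐ ω ∂S.P,
    (∀ x ∈ Strip, ‖fderivWithin ℝ (liftF S Qb Pb ω) Strip x‖ ≤ C) ∧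
    (∀ G : ℝ × ℝ → ℝ × ℝ, Set.InvOn G (liftF S Qb Pb ω) Strip Strip →
      ∀ x ∈ Strip, ‖fderivWithin ℝ G Strip x‖ ≤ C)

/-- Positive monotone area-preserving random twist: `p ↦ Q̄(ω,p)` is increasing a.s. -/
def IsPosMonotone (S : RandomSetup Ω) (Qb Pb : Ω → ℝ → ℝ) : Prop :=
  IsAPRandomTwist S Qb Pb ∧
  ∀ᵐ ω ∂S.P, StrictMonoOn (Qb ω) (Set.Icc (-1 : ℝ) 1)

/-- Negative monotone area-preserving random twist: the (stationary) inverse of a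
positive monotone area-preserving random twist. -/
def IsNegMonotone (S : RandomSetup Ω) (Qb Pb : Ω → ℝ → ℝ) : Prop :=
  Measurable (fun z : Ω × ℝ => (Qb z.1 z.2, Pb z.1 z.2)) ∧
  ∃ Qb' Pb' : Ω → ℝ → ℝ, IsPosMonotone S Qb' Pb' ∧
    ∀ᵐ ω ∂S.P, Set.InvOn (liftF S Qb Pb ω) (liftF S Qb' Pb' ω) Strip Strip

/-- Monotone area-preserving random twist: positive or negative monotone. -/
def IsMonotoneTwist (S : RandomSetup Ω) (Qb Pb : Ω → ℝ → ℝ) : Prop :=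
  IsPosMonotone S Qb Pb ∨ IsNegMonotone S Qb Pb

/-- Isotopic to the identity through stationary lifts: (a) each `F^t` is a stationary
lift and a diffeomorphism of the strip, with `F^0 = id` and `F^1 = F`; (b) the
normalization `(1/2)∫_{-1}^1 𝔼 det DF^t dp = 1`; (c) `dF^t/dt`, `F^t` and `(F^t)⁻¹`
are bounded, a.s., uniformly in `t`. -/
def IsotopicToId (S : RandomSetup Ω) (Qb Pb : Ω → ℝ → ℝ) : Prop :=
  ∃ Qt Pt : ℝ → Ω → ℝ → ℝ,
    (∀ ω p, Qt 0 ω p = 0 ∧ Pt 0 ω p = p) ∧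
    (∀ ω p, Qt 1 ω p = Qb ω p ∧ Pt 1 ω p = Pb ω p) ∧
    (∀ t ∈ Set.Icc (0 : ℝ) 1, ∀ᵐ ω ∂S.P, IsDiffeoStrip (liftF S (Qt t) (Pt t) ω)) ∧
    (∀ t ∈ Set.Icc (0 : ℝ) 1,
      (1 / 2 : ℝ) *
        ∫ p in (-1 : ℝ)..1, (∫ ω, (DFmat (liftF S (Qt t) (Pt t) ω) (0, p)).det ∂S.P) = 1) ∧
    (∃ C : ℝ, ∀ t ∈ Set.Icc (0 : ℝ) 1, ∀ᵐ ω ∂S.P,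
      (∀ x ∈ Strip,
        ‖liftF S (Qt t) (Pt t) ω x - x‖ ≤ C ∧
        ‖fderivWithin ℝ (liftF S (Qt t) (Pt t) ω) Strip x‖ ≤ C ∧
        ‖derivWithin (fun s => liftF S (Qt s) (Pt s) ω x) (Set.Icc (0 : ℝ) 1) t‖ ≤ C) ∧
      (∀ G : ℝ × ℝ → ℝ × ℝ, Set.InvOn G (liftF S (Qt t) (Pt t) ω) Strip Strip →
        ∀ x ∈ Strip, ‖fderivWithin ℝ G Strip x‖ ≤ C))

/-- The set of fixed points of a strip map. -/
def FixedPts (F : ℝ × ℝ → ℝ × ℝ) : Set (ℝ × ℝ) := {x | x ∈ Strip ∧ F x = x}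

/-- `compSeq fs N = fs N ∘ ⋯ ∘ fs 1 ∘ fs 0`. -/
def compSeq (fs : ℕ → ℝ × ℝ → ℝ × ℝ) : ℕ → ℝ × ℝ → ℝ × ℝ
  | 0 => fs 0
  | n + 1 => fs (n + 1) ∘ compSeq fs n

/-- **Proposition 2.3.** If `ℒ` is a generalized generating function of complexity `N`
for an area-preserving random twist `F`, and `(q̄,ξ̄)` is a critical point of
`ℐ(q,ξ) = ℒ(τ_q ω, 0, ξ₁ − q, …, ξ_N − q)`, then `(q̄, −𝒢_q(q̄,q̄;ξ̄))` is a fixed point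
of `F(·,·;ω)`. -/
theorem statement6 {Ω : Type} [MetricSpace Ω] [MeasurableSpace Ω] [BorelSpace Ω]
    (S : RandomSetup Ω) (Qb Pb : Ω → ℝ → ℝ) (N : ℕ)
    (L : Ω → ℝ → (Fin N → ℝ) → ℝ)
    (htwist : IsAPRandomTwist S Qb Pb)
    (ω : Ω)
    -- boundary twisting along the orbit of `ω` (so that `0 ∈ [Q̄(ω,-1), Q̄(ω,1)]`)
    (hQneg : ∀ q : ℝ, Qb (S.τ q ω) (-1) < 0)
    (hQpos : ∀ q : ℝ, 0 < Qb (S.τ q ω) 1)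
    -- `ℒ` is C¹ (through the flow)
    (hC1 : ContDiff ℝ 1 fun z : ℝ × ℝ × (Fin N → ℝ) => L (S.τ z.1 ω) z.2.1 z.2.2)
    -- `ℒ` is a generalized generating function of complexity `N` for `F`:
    (hGen : ∀ (q Q : ℝ) (ξ : Fin N → ℝ),
      Qb (S.τ q ω) (-1) ≤ Q - q → Q - q ≤ Qb (S.τ q ω) 1 →
      fderiv ℝ (fun ξ' : Fin N → ℝ => L (S.τ q ω) (Q - q) (fun i => ξ' i - q)) ξ = 0 →
      liftF S Qb Pb ω
          (q, -deriv (fun q' => L (S.τ q' ω) (Q - q') (fun i => ξ i - q')) q) =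
        (Q, deriv (fun Q' => L (S.τ q ω) (Q' - q) (fun i => ξ i - q)) Q))
    (qbar : ℝ) (ξbar : Fin N → ℝ)
    -- `(q̄, ξ̄)` is a critical point of `ℐ(q,ξ) = ℒ(τ_q ω, 0, ξ₁-q, …, ξ_N-q)`
    (hcrit : fderiv ℝ
      (fun z : ℝ × (Fin N → ℝ) => L (S.τ z.1 ω) 0 (fun i => z.2 i - z.1)) (qbar, ξbar) = 0) :
    liftF S Qb Pb ω
        (qbar, -deriv (fun q' => L (S.τ q' ω) (qbar - q') (fun i => ξbar i - q')) qbar) =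
      (qbar, -deriv (fun q' => L (S.τ q' ω) (qbar - q') (fun i => ξbar i - q')) qbar) := by
  have hg : Differentiable ℝ (fun z : ℝ × ℝ × (Fin N → ℝ) => L (S.τ z.1 ω) z.2.1 z.2.2) :=
    hC1.differentiable one_ne_zero
  set D : (ℝ × ℝ × (Fin N → ℝ)) →L[ℝ] ℝ :=
    fderiv ℝ (fun z : ℝ × ℝ × (Fin N → ℝ) => L (S.τ z.1 ω) z.2.1 z.2.2)
      (qbar, 0, fun i => ξbar i - qbar) with hDdef
  have hgD : HasFDerivAt (fun z : ℝ × ℝ × (Fin N → ℝ) => L (S.τ z.1 ω) z.2.1 z.2.2) D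
      (qbar, 0, fun i => ξbar i - qbar) := (hg _).hasFDerivAt
  have hgD' : HasFDerivAt (fun z : ℝ × ℝ × (Fin N → ℝ) => L (S.τ z.1 ω) z.2.1 z.2.2) D
      (qbar, qbar - qbar, fun i => ξbar i - qbar) := by simpa using hgD
  -- `Φ` is differentiable with zero derivative at the critical point
  have hΦd : DifferentiableAt ℝ
      (fun z : ℝ × (Fin N → ℝ) => L (S.τ z.1 ω) 0 (fun i => z.2 i - z.1)) (qbar, ξbar) := by
    have hk : DifferentiableAt ℝ (fun z : ℝ × (Fin N → ℝ) =>
        ((z.1, 0, fun i => z.2 i - z.1) : ℝ × ℝ × (Fin N → ℝ))) (qbar, ξbar) := by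
      fun_prop
    exact (hg _).comp _ hk
  have hΦ : HasFDerivAt (fun z : ℝ × (Fin N → ℝ) => L (S.τ z.1 ω) 0 (fun i => z.2 i - z.1))
      (0 : (ℝ × (Fin N → ℝ)) →L[ℝ] ℝ) (qbar, ξbar) := by
    have h := hΦd.hasFDerivAt
    rwa [hcrit] at h
  -- derivative of the pi-component curve
  have hpi : HasDerivAt (fun q : ℝ => fun i : Fin N => ξbar i - q)
      (fun _ : Fin N => (-1 : ℝ)) qbar := by
    rw [hasDerivAt_pi]
    intro i
    simpa using ((hasDerivAt_id qbar).const_sub (ξbar i))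
  -- derivative of `q' ↦ 𝒢(q', qbar; ξbar)`
  have hcq : HasDerivAt
      (fun q' : ℝ => ((q', qbar - q', fun i => ξbar i - q') : ℝ × ℝ × (Fin N → ℝ)))
      (1, -1, fun _ : Fin N => (-1 : ℝ)) qbar := by
    refine (hasDerivAt_id qbar).prodMk (HasDerivAt.prodMk ?_ hpi)
    simpa using ((hasDerivAt_id qbar).const_sub qbar)
  have hGq : HasDerivAt (fun q' => L (S.τ q' ω) (qbar - q') (fun i => ξbar i - q'))
      (D (1, -1, fun _ : Fin N => (-1 : ℝ))) qbar := by have := hgD'.comp_hasDerivAt qbar hcq; exact this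
  -- derivative of `Q' ↦ 𝒢(qbar, Q'; ξbar)`
  have hcQ : HasDerivAt
      (fun Q' : ℝ => ((qbar, Q' - qbar, fun i => ξbar i - qbar) : ℝ × ℝ × (Fin N → ℝ)))
      (0, 1, (0 : Fin N → ℝ)) qbar :=
    (hasDerivAt_const qbar qbar).prodMk
      (((hasDerivAt_id qbar).sub_const qbar).prodMk (hasDerivAt_const qbar _))
  have hGQ : HasDerivAt (fun Q' => L (S.τ qbar ω) (Q' - qbar) (fun i => ξbar i - qbar))
      (D (0, 1, (0 : Fin N → ℝ))) qbar := by have := hgD'.comp_hasDerivAt qbar hcQ; exact this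
  -- the `q`-derivative of `ℐ` vanishes, in two ways
  have hIq0 : HasDerivAt (fun q : ℝ => L (S.τ q ω) 0 (fun i => ξbar i - q)) 0 qbar := by
    have hc1 : HasDerivAt (fun q : ℝ => ((q, ξbar) : ℝ × (Fin N → ℝ))) (1, 0) qbar :=
      (hasDerivAt_id qbar).prodMk (hasDerivAt_const qbar ξbar)
    have h := hΦ.comp_hasDerivAt qbar hc1
    simpa [Function.comp_def] using h
  have hIq : HasDerivAt (fun q : ℝ => L (S.τ q ω) 0 (fun i => ξbar i - q))
      (D (1, 0, fun _ : Fin N => (-1 : ℝ))) qbar := by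
    have hc : HasDerivAt
        (fun q : ℝ => ((q, (0 : ℝ), fun i => ξbar i - q) : ℝ × ℝ × (Fin N → ℝ)))
        (1, 0, fun _ : Fin N => (-1 : ℝ)) qbar :=
      (hasDerivAt_id qbar).prodMk ((hasDerivAt_const qbar (0 : ℝ)).prodMk hpi)
    exact hgD.comp_hasDerivAt qbar hc
  have hzero : D (1, 0, fun _ : Fin N => (-1 : ℝ)) = 0 := hIq.unique hIq0
  -- the `ξ`-derivative of `ℐ` vanishes
  have hξ : fderiv ℝ
      (fun ξ' : Fin N → ℝ => L (S.τ qbar ω) (qbar - qbar) (fun i => ξ' i - qbar)) ξbar = 0 := by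
    have hψ : HasFDerivAt (fun ξ' : Fin N → ℝ => ((qbar, ξ') : ℝ × (Fin N → ℝ)))
        ((0 : (Fin N → ℝ) →L[ℝ] ℝ).prod (ContinuousLinearMap.id ℝ (Fin N → ℝ))) ξbar :=
      (hasFDerivAt_const qbar ξbar).prodMk (hasFDerivAt_id ξbar)
    have h2 : HasFDerivAt (fun ξ' : Fin N → ℝ => L (S.τ qbar ω) 0 (fun i => ξ' i - qbar))
        (0 : (Fin N → ℝ) →L[ℝ] ℝ) ξbar := by
      have h := hΦ.comp ξbar hψ
      simpa [Function.comp_def] using h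
    simp only [sub_self]
    exact h2.fderiv
  have key := hGen qbar qbar ξbar (by simpa using (hQneg qbar).le)
    (by simpa using (hQpos qbar).le) hξ
  rw [key, hGq.deriv, hGQ.deriv]
  have e : ((1 : ℝ), (-1 : ℝ), fun _ : Fin N => (-1 : ℝ)) =
      (((1 : ℝ), (0 : ℝ), fun _ : Fin N => (-1 : ℝ)) : ℝ × ℝ × (Fin N → ℝ)) -
        ((0 : ℝ), (1 : ℝ), (0 : Fin N → ℝ)) := by
    refine Prod.ext (by norm_num) (Prod.ext (by norm_num) ?_)
    funext i
    simp
  have : D (1, -1, fun _ : Fin N => (-1 : ℝ)) = -(D (0, 1, (0 : Fin N → ℝ))) := by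
    rw [e, map_sub, hzero]
    simp
  rw [this, neg_neg]
end
end

section
/- Let (Ω,ℱ,P,τ) be a probability space setup and ψ̄ : Ω → ℝ a bounded measurable function such that a ↦ ψ(a,ω) := ψ̄(τ_a ω) is continuous for P-almost every ω. If, with positive probability, the function a ↦ ψ(a,ω) is monotone on some interval [a₀,∞), then ψ̄ is P-almost surely equal to a constant. Consequently, if ψ̄ is not P-almost surely constant, then for P-almost every ω the function a ↦ ψ(a,ω) oscillates infinitely often; in particular it has infinitely many local maxima and infinitely many local minima, and if it is moreover C¹ in a, it has infinitely many critical points. -/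
open MeasureTheory Set Filter
open scoped ENNReal Topology

noncomputable section

variable {Ω : Type} [MetricSpace Ω] [MeasurableSpace Ω] [BorelSpace Ω]

/-! ### Auxiliary material for Proposition 4.3 -/

section Statement9Aux

/-- If two uniformly bounded real sequences differ by `o(1)`, the `limsup` of the first is at
most that of the second. -/
lemma st9_limsup_le {u v : ℕ → ℝ} {B : ℝ} (hu : ∀ n, |u n| ≤ B) (hv : ∀ n, |v n| ≤ B)
    (h : Tendsto (fun n => u n - v n) atTop (𝓝 0)) :
    limsup u atTop ≤ limsup v atTop := by
  have hvB : IsBoundedUnder (· ≤ ·) atTop v :=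
    isBoundedUnder_of ⟨B, fun n => (abs_le.1 (hv n)).2⟩
  have hvC : IsCoboundedUnder (· ≤ ·) atTop v :=
    IsBoundedUnder.isCoboundedUnder_le (isBoundedUnder_of ⟨-B, fun n => (abs_le.1 (hv n)).1⟩)
  have huC : IsCoboundedUnder (· ≤ ·) atTop u :=
    IsBoundedUnder.isCoboundedUnder_le (isBoundedUnder_of ⟨-B, fun n => (abs_le.1 (hu n)).1⟩)
  refine le_of_forall_pos_le_add fun ε hε => ?_
  have hev : ∀ᶠ n in atTop, u n ≤ v n + ε := by
    filter_upwards [h.eventually_lt_const hε] with n hn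
    linarith
  have h2 : limsup u atTop ≤ limsup (fun n => v n + ε) atTop :=
    limsup_le_limsup hev huC
      (isBoundedUnder_of ⟨B + ε, fun n => by have := (abs_le.1 (hv n)).2; linarith⟩)
  have hmono : Monotone fun x : ℝ => x + ε := fun x y hxy => by dsimp; linarith
  have h3 : limsup (fun n => v n + ε) atTop = limsup v atTop + ε :=
    (hmono.map_limsup_of_continuousAt v ((continuous_id.add continuous_const).continuousAt)
      hvB hvC).symm
  rw [h3] at h2
  exact h2

/-- If two uniformly bounded real sequences differ by `o(1)`, their `limsup`s agree. -/
lemma st9_limsup_eq {u v : ℕ → ℝ} {B : ℝ} (hu : ∀ n, |u n| ≤ B) (hv : ∀ n, |v n| ≤ B)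
    (h : Tendsto (fun n => u n - v n) atTop (𝓝 0)) :
    limsup u atTop = limsup v atTop := by
  refine le_antisymm (st9_limsup_le hu hv h) (st9_limsup_le hv hu ?_)
  have := h.neg
  simp only [neg_sub, neg_zero] at this
  exact this

variable {Ω : Type} [MetricSpace Ω] [MeasurableSpace Ω] [BorelSpace Ω]

/-- The Cesàro averages `1/(n+1) ∫_0^{n+1} h(τ_s ω) ds`. -/
def st9U (S : RandomSetup Ω) (h : Ω → ℝ) (n : ℕ) (ω : Ω) : ℝ :=
  ((n : ℝ) + 1)⁻¹ * ∫ s in (0:ℝ)..((n : ℝ) + 1), h (S.τ s ω)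

/-- The limsup of the Cesàro averages: an exactly shift-invariant measurable functional. -/
def st9L (S : RandomSetup Ω) (h : Ω → ℝ) (ω : Ω) : ℝ :=
  limsup (fun n => st9U S h n ω) atTop

lemma st9_orbit_meas (S : RandomSetup Ω) (h : Ω → ℝ) (hm : Measurable h) (ω : Ω) :
    Measurable fun s : ℝ => h (S.τ s ω) :=
  hm.comp ((S.cont.comp (continuous_id.prodMk continuous_const)).measurable)

lemma st9_intInt (S : RandomSetup Ω) (h : Ω → ℝ) (hm : Measurable h) {B : ℝ}
    (hb : ∀ ω, |h ω| ≤ B) (ω : Ω) (a b : ℝ) :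
    IntervalIntegrable (fun s => h (S.τ s ω)) volume a b := by
  have hmeas := st9_orbit_meas S h hm ω
  rw [intervalIntegrable_iff]
  haveI : IsFiniteMeasure (volume.restrict (Set.uIoc a b)) :=
    ⟨by rw [Measure.restrict_apply_univ]; exact measure_Ioc_lt_top⟩
  exact (integrable_const B).mono' hmeas.aestronglyMeasurable
    (ae_of_all _ fun s => by rw [Real.norm_eq_abs]; exact hb _)

lemma st9_absU_le (S : RandomSetup Ω) (h : Ω → ℝ) {B : ℝ} (hm : Measurable h)
    (hb : ∀ ω, |h ω| ≤ B) (n : ℕ) (ω : Ω) : |st9U S h n ω| ≤ B := by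
  have hn : (0:ℝ) < (n : ℝ) + 1 := by positivity
  have h1 : ‖∫ s in (0:ℝ)..((n : ℝ) + 1), h (S.τ s ω)‖ ≤ B * |((n : ℝ) + 1) - 0| :=
    intervalIntegral.norm_integral_le_of_norm_le_const fun x _ => by
      rw [Real.norm_eq_abs]; exact hb _
  rw [Real.norm_eq_abs, sub_zero, abs_of_pos hn] at h1
  rw [st9U, abs_mul, abs_inv, abs_of_pos hn]
  calc ((n : ℝ) + 1)⁻¹ * |∫ s in (0:ℝ)..((n : ℝ) + 1), h (S.τ s ω)|
      ≤ ((n : ℝ) + 1)⁻¹ * (B * ((n : ℝ) + 1)) := by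
        exact mul_le_mul_of_nonneg_left h1 (by positivity)
    _ = B := by field_simp

lemma st9U_meas (S : RandomSetup Ω) (h : Ω → ℝ) (hm : Measurable h) (n : ℕ) :
    Measurable fun ω => st9U S h n ω := by
  have heq : (fun ω => st9U S h n ω)
      = fun ω => ((n : ℝ) + 1)⁻¹ * ∫ s in Set.Ioc (0:ℝ) ((n : ℝ) + 1), h (S.τ s ω) := by
    funext ω
    rw [st9U, intervalIntegral.integral_of_le (by positivity)]
  rw [heq]
  have hjm : StronglyMeasurable (Function.uncurry fun (ω : Ω) (s : ℝ) => h (S.τ s ω)) :=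
    (hm.comp (S.cont.measurable.comp (measurable_snd.prodMk measurable_fst))).stronglyMeasurable
  exact (hjm.integral_prod_right).measurable.const_mul _

lemma st9L_meas (S : RandomSetup Ω) (h : Ω → ℝ) (hm : Measurable h) :
    Measurable (st9L S h) := by
  show Measurable fun ω => limsup (fun n => st9U S h n ω) atTop
  exact Measurable.limsup fun n => st9U_meas S h hm n

lemma st9_shiftU (S : RandomSetup Ω) (h : Ω → ℝ) (hm : Measurable h) {B : ℝ}
    (hb : ∀ ω, |h ω| ≤ B) (b : ℝ) (ω : Ω) (n : ℕ) :
    |st9U S h n (S.τ b ω) - st9U S h n ω| ≤ ((n : ℝ) + 1)⁻¹ * (2 * B * |b|) := by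
  have hn : (0:ℝ) < (n : ℝ) + 1 := by positivity
  set f : ℝ → ℝ := fun s => h (S.τ s ω) with hf
  have hint : ∀ a c : ℝ, IntervalIntegrable f volume a c := st9_intInt S h hm hb ω
  have e1 : (fun s => h (S.τ s (S.τ b ω))) = fun s => f (s + b) := by
    funext s
    rw [hf]
    simp only
    rw [S.map_add]
  have e2 : (∫ s in (0:ℝ)..((n : ℝ) + 1), h (S.τ s (S.τ b ω)))
      = ∫ s in b..(((n : ℝ) + 1) + b), f s := by
    rw [e1, intervalIntegral.integral_comp_add_right f b, zero_add]
  have e3 : (∫ s in b..(((n : ℝ) + 1) + b), f s)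
      = (∫ s in b..(0:ℝ), f s) + ∫ s in (0:ℝ)..(((n : ℝ) + 1) + b), f s :=
    (intervalIntegral.integral_add_adjacent_intervals (hint b 0) (hint 0 _)).symm
  have e4 : (∫ s in (0:ℝ)..(((n : ℝ) + 1) + b), f s)
      = (∫ s in (0:ℝ)..((n : ℝ) + 1), f s) + ∫ s in ((n : ℝ) + 1)..(((n : ℝ) + 1) + b), f s :=
    (intervalIntegral.integral_add_adjacent_intervals (hint 0 _) (hint _ _)).symm
  have hb1 : |∫ s in b..(0:ℝ), f s| ≤ B * |b| := by
    have := intervalIntegral.norm_integral_le_of_norm_le_const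
      (a := b) (b := 0) (C := B) (f := f)
      (fun x _ => by rw [Real.norm_eq_abs]; exact hb _)
    rw [Real.norm_eq_abs, zero_sub, abs_neg] at this
    exact this
  have hb2 : |∫ s in ((n : ℝ) + 1)..(((n : ℝ) + 1) + b), f s| ≤ B * |b| := by
    have := intervalIntegral.norm_integral_le_of_norm_le_const
      (a := ((n : ℝ) + 1)) (b := ((n : ℝ) + 1) + b) (C := B) (f := f)
      (fun x _ => by rw [Real.norm_eq_abs]; exact hb _)
    rw [Real.norm_eq_abs, add_sub_cancel_left] at this
    exact this
  have key : st9U S h n (S.τ b ω) - st9U S h n ω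
      = ((n : ℝ) + 1)⁻¹ * ((∫ s in b..(0:ℝ), f s)
        + ∫ s in ((n : ℝ) + 1)..(((n : ℝ) + 1) + b), f s) := by
    rw [st9U, st9U, e2, e3, e4]
    ring
  rw [key, abs_mul, abs_inv, abs_of_pos hn]
  have habs : |(∫ s in b..(0:ℝ), f s) + ∫ s in ((n : ℝ) + 1)..(((n : ℝ) + 1) + b), f s|
      ≤ 2 * B * |b| := by
    calc |(∫ s in b..(0:ℝ), f s) + ∫ s in ((n : ℝ) + 1)..(((n : ℝ) + 1) + b), f s|
        ≤ |∫ s in b..(0:ℝ), f s| + |∫ s in ((n : ℝ) + 1)..(((n : ℝ) + 1) + b), f s| :=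
          abs_add_le _ _
      _ ≤ 2 * B * |b| := by linarith
  exact mul_le_mul_of_nonneg_left habs (by positivity)

lemma st9L_shift (S : RandomSetup Ω) (h : Ω → ℝ) (hm : Measurable h) {B : ℝ}
    (hb : ∀ ω, |h ω| ≤ B) (b : ℝ) (ω : Ω) : st9L S h (S.τ b ω) = st9L S h ω := by
  refine st9_limsup_eq (fun n => st9_absU_le S h hm hb n (S.τ b ω))
    (fun n => st9_absU_le S h hm hb n ω) ?_
  have h1 : Tendsto (fun n : ℕ => ((n : ℝ) + 1)) atTop atTop :=
    tendsto_atTop_add_const_right _ 1 tendsto_natCast_atTop_atTop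
  have hB0 : Tendsto (fun n : ℕ => ((n : ℝ) + 1)⁻¹ * (2 * B * |b|)) atTop (𝓝 0) := by
    have := (h1.inv_tendsto_atTop).mul_const (2 * B * |b|)
    simpa using this
  exact squeeze_zero_norm
    (fun n => by rw [Real.norm_eq_abs]; exact st9_shiftU S h hm hb b ω n) hB0

/-- Cesàro averages of a `[0,1]`-valued observable tending to `0` along the orbit tend to `0`. -/
lemma st9_tendstoU_zero (S : RandomSetup Ω) (g : Ω → ℝ) (hm : Measurable g)
    (h0 : ∀ ω, 0 ≤ g ω) (h1 : ∀ ω, g ω ≤ 1) {ω : Ω}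
    (hten : Tendsto (fun s => g (S.τ s ω)) atTop (𝓝 0)) :
    Tendsto (fun n => st9U S g n ω) atTop (𝓝 0) := by
  have hb : ∀ ω', |g ω'| ≤ 1 := fun ω' => abs_le.2 ⟨by linarith [h0 ω'], h1 ω'⟩
  have hint := st9_intInt S g hm hb ω
  have hnn : ∀ n : ℕ, 0 ≤ st9U S g n ω := fun n =>
    mul_nonneg (by positivity) (intervalIntegral.integral_nonneg (by positivity) fun s _ => h0 _)
  have hbdd : IsBoundedUnder (· ≤ ·) atTop fun n => st9U S g n ω :=
    isBoundedUnder_of ⟨1, fun n => (abs_le.1 (st9_absU_le S g hm hb n ω)).2⟩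
  have hcob : IsCoboundedUnder (· ≤ ·) atTop fun n => st9U S g n ω :=
    IsBoundedUnder.isCoboundedUnder_le (isBoundedUnder_of ⟨0, hnn⟩)
  refine tendsto_of_le_liminf_of_limsup_le ?_ ?_ hbdd (isBoundedUnder_of ⟨0, hnn⟩)
  · exact le_liminf_of_le hbdd.isCoboundedUnder_ge (Eventually.of_forall hnn)
  · refine le_of_forall_pos_le_add fun ε hε => ?_
    rw [zero_add]
    apply limsup_le_of_le hcob
    obtain ⟨S₁, hS₁⟩ := eventually_atTop.1 (hten.eventually_le_const (half_pos hε))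
    set S₀ := max S₁ 0 with hS₀def
    have hS₀0 : 0 ≤ S₀ := le_max_right _ _
    have hsmall : ∀ s, S₀ ≤ s → g (S.τ s ω) ≤ ε / 2 := fun s hs =>
      hS₁ s (le_trans (le_max_left _ _) hs)
    have htend2 : Tendsto (fun n : ℕ => ((n : ℝ) + 1)⁻¹ * S₀) atTop (𝓝 0) := by
      have h1' : Tendsto (fun n : ℕ => ((n : ℝ) + 1)) atTop atTop :=
        tendsto_atTop_add_const_right _ 1 tendsto_natCast_atTop_atTop
      have := (h1'.inv_tendsto_atTop).mul_const S₀
      simpa using this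
    have hev1 : ∀ᶠ n : ℕ in atTop, S₀ ≤ (n : ℝ) + 1 := by
      filter_upwards [(tendsto_natCast_atTop_atTop (R := ℝ)).eventually_ge_atTop S₀] with n hn
      linarith
    have hev2 : ∀ᶠ n : ℕ in atTop, ((n : ℝ) + 1)⁻¹ * S₀ ≤ ε / 2 :=
      htend2.eventually_le_const (half_pos hε)
    filter_upwards [hev1, hev2] with n hn1 hn2
    have hn : (0:ℝ) < (n : ℝ) + 1 := by positivity
    have hsplit : (∫ s in (0:ℝ)..((n : ℝ) + 1), g (S.τ s ω))
        = (∫ s in (0:ℝ)..S₀, g (S.τ s ω)) + ∫ s in S₀..((n : ℝ) + 1), g (S.τ s ω) :=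
      (intervalIntegral.integral_add_adjacent_intervals (hint 0 S₀) (hint S₀ _)).symm
    have hI1 : (∫ s in (0:ℝ)..S₀, g (S.τ s ω)) ≤ S₀ := by
      have hh := intervalIntegral.norm_integral_le_of_norm_le_const
        (a := (0:ℝ)) (b := S₀) (C := 1) (f := fun s => g (S.τ s ω))
        (fun x _ => by rw [Real.norm_eq_abs]; exact hb _)
      rw [Real.norm_eq_abs, sub_zero, abs_of_nonneg hS₀0, one_mul] at hh
      exact le_trans (le_abs_self _) hh
    have hI2 : (∫ s in S₀..((n : ℝ) + 1), g (S.τ s ω)) ≤ ε / 2 * ((n : ℝ) + 1) := by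
      have hbnd : ∀ x ∈ Set.uIoc S₀ ((n : ℝ) + 1), ‖g (S.τ x ω)‖ ≤ ε / 2 := by
        intro x hx
        rw [Real.norm_eq_abs, abs_of_nonneg (h0 _)]
        apply hsmall x
        have hlow : S₀ ⊓ ((n : ℝ) + 1) < x := hx.1
        rw [inf_eq_left.2 hn1] at hlow
        exact le_of_lt hlow
      have hh := intervalIntegral.norm_integral_le_of_norm_le_const hbnd
      rw [Real.norm_eq_abs] at hh
      have habs : |((n : ℝ) + 1) - S₀| ≤ (n : ℝ) + 1 := by
        rw [abs_of_nonneg (by linarith)]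
        linarith
      calc (∫ s in S₀..((n : ℝ) + 1), g (S.τ s ω))
          ≤ |∫ s in S₀..((n : ℝ) + 1), g (S.τ s ω)| := le_abs_self _
        _ ≤ ε / 2 * |((n : ℝ) + 1) - S₀| := hh
        _ ≤ ε / 2 * ((n : ℝ) + 1) := mul_le_mul_of_nonneg_left habs (by linarith)
    calc st9U S g n ω
        = ((n : ℝ) + 1)⁻¹ * ((∫ s in (0:ℝ)..S₀, g (S.τ s ω))
            + ∫ s in S₀..((n : ℝ) + 1), g (S.τ s ω)) := by rw [st9U, hsplit]
      _ ≤ ((n : ℝ) + 1)⁻¹ * (S₀ + ε / 2 * ((n : ℝ) + 1)) :=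
          mul_le_mul_of_nonneg_left (add_le_add hI1 hI2) (by positivity)
      _ = ((n : ℝ) + 1)⁻¹ * S₀ + ε / 2 := by field_simp
      _ ≤ ε := by linarith

/-- A bounded continuous function, eventually monotone on a half line, converges at `+∞`. -/
lemma st9_exists_tendsto {f : ℝ → ℝ} {C : ℝ} (hbd : ∀ a, |f a| ≤ C) {a₀ : ℝ}
    (h : MonotoneOn f (Set.Ici a₀) ∨ AntitoneOn f (Set.Ici a₀)) :
    ∃ L, Tendsto f atTop (𝓝 L) := by
  rcases h with h | h
  · set g : ℝ → ℝ := fun s => f (max s a₀) with hg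
    have hmono : Monotone g := fun x y hxy =>
      h (le_max_right x a₀) (le_max_right y a₀) (max_le_max hxy le_rfl)
    have hbdd : BddAbove (Set.range g) := ⟨C, by
      rintro _ ⟨s, rfl⟩
      exact (abs_le.1 (hbd _)).2⟩
    refine ⟨_, Tendsto.congr' ?_ (tendsto_atTop_ciSup hmono hbdd)⟩
    filter_upwards [eventually_ge_atTop a₀] with s hs
    rw [hg]
    simp only
    rw [max_eq_left hs]
  · set g : ℝ → ℝ := fun s => f (max s a₀) with hg
    have hanti : Antitone g := fun x y hxy =>
      h (le_max_right x a₀) (le_max_right y a₀) (max_le_max hxy le_rfl)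
    have hbdd : BddBelow (Set.range g) := ⟨-C, by
      rintro _ ⟨s, rfl⟩
      exact (abs_le.1 (hbd _)).1⟩
    refine ⟨_, Tendsto.congr' ?_ (tendsto_atTop_ciInf hanti hbdd)⟩
    filter_upwards [eventually_ge_atTop a₀] with s hs
    rw [hg]
    simp only
    rw [max_eq_left hs]

/-- Key step: if, with positive probability, the process is eventually monotone, then for every
`t` we have `ψ̄ ∘ τ_t = ψ̄` almost surely. -/
lemma st9_shift_ae (S : RandomSetup Ω) (psib : Ω → ℝ) (hm : Measurable psib)
    (hbd : ∃ C : ℝ, ∀ ω, |psib ω| ≤ C)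
    (hcont : ∀ᵐ ω ∂S.P, Continuous fun a : ℝ => psib (S.τ a ω))
    (hpos : 0 < S.P {ω | ∃ a₀ : ℝ,
        MonotoneOn (fun a => psib (S.τ a ω)) (Set.Ici a₀) ∨
        AntitoneOn (fun a => psib (S.τ a ω)) (Set.Ici a₀)})
    (t : ℝ) : ∀ᵐ ω ∂S.P, psib (S.τ t ω) = psib ω := by
  haveI := S.prob
  obtain ⟨C, hC⟩ := hbd
  set g : Ω → ℝ := fun ω => min 1 |psib (S.τ t ω) - psib ω| with hg
  have hgm : Measurable g :=
    measurable_const.min ((hm.comp (S.invariant t).measurable).sub hm).abs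
  have hg0 : ∀ ω, 0 ≤ g ω := fun ω => le_min zero_le_one (abs_nonneg _)
  have hg1 : ∀ ω, g ω ≤ 1 := fun ω => min_le_left _ _
  have hgabs : ∀ ω, |g ω| ≤ 1 := fun ω => abs_le.2 ⟨by linarith [hg0 ω], hg1 ω⟩
  have hWinv : ∀ b ω, st9L S g (S.τ b ω) = st9L S g ω := st9L_shift S g hgm hgabs
  have hWmeas : Measurable (st9L S g) := st9L_meas S g hgm
  set A := st9L S g ⁻¹' {0} with hA
  have hAmeas : MeasurableSet A := hWmeas (measurableSet_singleton 0)
  have hAinv : ∀ b : ℝ, S.τ b ⁻¹' A = A := by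
    intro b
    ext ω
    simp only [hA, Set.mem_preimage, Set.mem_singleton_iff]
    rw [hWinv]
  have hsub : {ω | (∃ a₀ : ℝ,
      MonotoneOn (fun a => psib (S.τ a ω)) (Set.Ici a₀) ∨
      AntitoneOn (fun a => psib (S.τ a ω)) (Set.Ici a₀)) ∧
      Continuous fun a : ℝ => psib (S.τ a ω)} ⊆ A := by
    rintro ω ⟨⟨a₀, hmono⟩, _⟩
    obtain ⟨L, hL⟩ := st9_exists_tendsto (f := fun a => psib (S.τ a ω)) (fun a => hC _) hmono
    have hgten : Tendsto (fun s => g (S.τ s ω)) atTop (𝓝 0) := by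
      have h1 : Tendsto (fun s : ℝ => psib (S.τ (t + s) ω)) atTop (𝓝 L) :=
        hL.comp (tendsto_atTop_add_const_left atTop t tendsto_id)
      have h2 : Tendsto (fun s : ℝ => psib (S.τ (t + s) ω) - psib (S.τ s ω)) atTop (𝓝 0) := by
        simpa using h1.sub hL
      have h3 : Tendsto (fun s : ℝ => |psib (S.τ (t + s) ω) - psib (S.τ s ω)|) atTop (𝓝 0) := by
        simpa using h2.abs
      have h4 : Tendsto (fun s : ℝ => min 1 |psib (S.τ (t + s) ω) - psib (S.τ s ω)|)
          atTop (𝓝 0) := by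
        have h5 := (tendsto_const_nhds (x := (1:ℝ)) (f := atTop)).min h3
        rw [show min (1:ℝ) 0 = 0 from min_eq_right zero_le_one] at h5
        exact h5
      refine h4.congr fun s => ?_
      simp only [hg]
      rw [S.map_add]
    have hzero : st9L S g ω = 0 := (st9_tendstoU_zero S g hgm hg0 hg1 hgten).limsup_eq
    simp only [hA, Set.mem_preimage, Set.mem_singleton_iff]
    exact hzero
  have hpos2 : 0 < S.P A := by
    have hN0 : S.P {ω | ¬ Continuous fun a : ℝ => psib (S.τ a ω)} = 0 := ae_iff.1 hcont
    have hsub2 : {ω | ∃ a₀ : ℝ,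
        MonotoneOn (fun a => psib (S.τ a ω)) (Set.Ici a₀) ∨
        AntitoneOn (fun a => psib (S.τ a ω)) (Set.Ici a₀)}
        ⊆ A ∪ {ω | ¬ Continuous fun a : ℝ => psib (S.τ a ω)} := by
      intro ω hω
      by_cases hcω : Continuous fun a : ℝ => psib (S.τ a ω)
      · exact Or.inl (hsub ⟨hω, hcω⟩)
      · exact Or.inr hcω
    calc (0:ℝ≥0∞) < S.P {ω | ∃ a₀ : ℝ,
          MonotoneOn (fun a => psib (S.τ a ω)) (Set.Ici a₀) ∨
          AntitoneOn (fun a => psib (S.τ a ω)) (Set.Ici a₀)} := hpos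
      _ ≤ S.P (A ∪ {ω | ¬ Continuous fun a : ℝ => psib (S.τ a ω)}) := measure_mono hsub2
      _ ≤ S.P A + S.P {ω | ¬ Continuous fun a : ℝ => psib (S.τ a ω)} := measure_union_le _ _
      _ = S.P A := by rw [hN0, add_zero]
  have hA1 : S.P A = 1 := (S.ergodic A hAmeas hAinv).resolve_left hpos2.ne'
  have hWae : ∀ᵐ ω ∂S.P, st9L S g ω = 0 := by
    have hc := (prob_compl_eq_zero_iff hAmeas).2 hA1
    rw [ae_iff]
    exact measure_mono_null (fun ω hω => hω) hc
  have haetend : ∀ᵐ ω ∂S.P, Tendsto (fun n => st9U S g n ω) atTop (𝓝 0) := by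
    filter_upwards [hWae] with ω hW
    have hnn : ∀ n : ℕ, 0 ≤ st9U S g n ω := fun n =>
      mul_nonneg (by positivity)
        (intervalIntegral.integral_nonneg (by positivity) fun s _ => hg0 _)
    have hbdd : IsBoundedUnder (· ≤ ·) atTop fun n => st9U S g n ω :=
      isBoundedUnder_of ⟨1, fun n => (abs_le.1 (st9_absU_le S g hgm hgabs n ω)).2⟩
    refine tendsto_of_le_liminf_of_limsup_le ?_ ?_ hbdd (isBoundedUnder_of ⟨0, hnn⟩)
    · exact le_liminf_of_le hbdd.isCoboundedUnder_ge (Eventually.of_forall hnn)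
    · exact le_of_eq hW
  have hInt : Tendsto (fun n => ∫ ω, st9U S g n ω ∂S.P) atTop (𝓝 (∫ _ : Ω, (0:ℝ) ∂S.P)) :=
    tendsto_integral_of_dominated_convergence (fun _ => 1)
      (fun n => (st9U_meas S g hgm n).aestronglyMeasurable) (integrable_const 1)
      (fun n => ae_of_all _ fun ω => by
        rw [Real.norm_eq_abs]; exact st9_absU_le S g hgm hgabs n ω) haetend
  have hfub : ∀ n : ℕ, ∫ ω, st9U S g n ω ∂S.P = ∫ ω, g ω ∂S.P := by
    intro n
    have hn : (0:ℝ) ≤ (n : ℝ) + 1 := by positivity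
    haveI : IsFiniteMeasure (volume.restrict (Set.Ioc (0:ℝ) ((n : ℝ) + 1))) :=
      ⟨by rw [Measure.restrict_apply_univ]; exact measure_Ioc_lt_top⟩
    have hum : Measurable (Function.uncurry fun (ω : Ω) (s : ℝ) => g (S.τ s ω)) :=
      hgm.comp (S.cont.measurable.comp (measurable_snd.prodMk measurable_fst))
    have hintg : Integrable (Function.uncurry fun (ω : Ω) (s : ℝ) => g (S.τ s ω))
        (S.P.prod (volume.restrict (Set.Ioc (0:ℝ) ((n : ℝ) + 1)))) :=
      (integrable_const 1).mono' hum.aestronglyMeasurable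
        (ae_of_all _ fun p => by rw [Real.norm_eq_abs]; exact hgabs _)
    have hswap := integral_integral_swap hintg
    have hconst : ∀ s : ℝ, ∫ ω, g (S.τ s ω) ∂S.P = ∫ ω, g ω ∂S.P := by
      intro s
      conv_rhs => rw [← (S.invariant s).map_eq]
      rw [integral_map (S.invariant s).measurable.aemeasurable
        ((S.invariant s).map_eq.symm ▸ hgm.aestronglyMeasurable)]
    calc ∫ ω, st9U S g n ω ∂S.P
        = ((n : ℝ) + 1)⁻¹ * ∫ ω, (∫ s in Set.Ioc (0:ℝ) ((n : ℝ) + 1), g (S.τ s ω)) ∂S.P := by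
          simp_rw [st9U, intervalIntegral.integral_of_le hn]
          exact integral_const_mul _ _
      _ = ((n : ℝ) + 1)⁻¹ * ∫ s in Set.Ioc (0:ℝ) ((n : ℝ) + 1), (∫ ω, g (S.τ s ω) ∂S.P) := by
          rw [hswap]
      _ = ((n : ℝ) + 1)⁻¹ * ∫ _ in Set.Ioc (0:ℝ) ((n : ℝ) + 1), (∫ ω, g ω ∂S.P) := by
          simp_rw [hconst]
      _ = ((n : ℝ) + 1)⁻¹ * (((n : ℝ) + 1) * ∫ ω, g ω ∂S.P) := by
          rw [setIntegral_const, measureReal_def, Real.volume_Ioc, sub_zero, ENNReal.toReal_ofReal hn,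
            smul_eq_mul]
      _ = ∫ ω, g ω ∂S.P := by
          rw [← mul_assoc, inv_mul_cancel₀ (by positivity), one_mul]
  have hg_int : Integrable g S.P :=
    (integrable_const 1).mono' hgm.aestronglyMeasurable
      (ae_of_all _ fun ω => by rw [Real.norm_eq_abs]; exact hgabs ω)
  have hI0 : ∫ ω, g ω ∂S.P = 0 := by
    have h2 : Tendsto (fun _ : ℕ => ∫ ω, g ω ∂S.P) atTop (𝓝 (∫ _ : Ω, (0:ℝ) ∂S.P)) :=
      hInt.congr fun n => hfub n
    have h3 := tendsto_nhds_unique h2 tendsto_const_nhds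
    simpa using h3.symm
  have hgz : g =ᵐ[S.P] 0 :=
    (integral_eq_zero_iff_of_nonneg (fun ω => hg0 ω) hg_int).1 hI0
  filter_upwards [hgz] with ω hω
  simp only [hg, Pi.zero_apply] at hω
  have habs0 : |psib (S.τ t ω) - psib ω| = 0 := by
    rcases min_eq_iff.1 hω with ⟨h1, _⟩ | ⟨h1, _⟩
    · exact absurd h1 one_ne_zero
    · exact h1
  exact sub_eq_zero.1 (abs_eq_zero.1 habs0)

/-- From failure of eventual monotonicity one extracts a strict decrease. -/
lemma st9_notmono {f : ℝ → ℝ} {a₀ : ℝ} (h : ¬ MonotoneOn f (Set.Ici a₀)) :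
    ∃ x y, a₀ ≤ x ∧ x < y ∧ f y < f x := by
  by_contra hc
  push_neg at hc
  apply h
  intro u hu v hv huv
  rcases eq_or_lt_of_le huv with rfl | hlt
  · exact le_rfl
  · exact hc u v hu hlt

lemma st9_notanti {f : ℝ → ℝ} {a₀ : ℝ} (h : ¬ AntitoneOn f (Set.Ici a₀)) :
    ∃ x y, a₀ ≤ x ∧ x < y ∧ f x < f y := by
  by_contra hc
  push_neg at hc
  apply h
  intro u hu v hv huv
  rcases eq_or_lt_of_le huv with rfl | hlt
  · exact le_rfl
  · exact hc u v hu hlt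

lemma st9_localmax_exists {f : ℝ → ℝ} (hf : Continuous f)
    (h : ∀ a₀ : ℝ, ¬ MonotoneOn f (Set.Ici a₀) ∧ ¬ AntitoneOn f (Set.Ici a₀)) :
    ∀ a₀ : ℝ, ∃ m, a₀ ≤ m ∧ IsLocalMax f m := by
  intro a₀
  obtain ⟨u, v, hua, huv, hfuv⟩ := st9_notanti (h a₀).2
  obtain ⟨x, y, hvx, hxy, hfxy⟩ := st9_notmono (h v).1
  have huy : u ≤ y := by linarith
  obtain ⟨m, hm, hmax⟩ := (isCompact_Icc (a := u) (b := y)).exists_isMaxOn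
    (Set.nonempty_Icc.2 huy) hf.continuousOn
  have hv_mem : v ∈ Set.Icc u y := ⟨huv.le, by linarith⟩
  have hx_mem : x ∈ Set.Icc u y := ⟨by linarith, hxy.le⟩
  have h1 : f u < f m := lt_of_lt_of_le hfuv (hmax hv_mem)
  have h2 : f y < f m := lt_of_lt_of_le hfxy (hmax hx_mem)
  have hmu : u < m := lt_of_le_of_ne hm.1 fun he => by rw [← he] at h1; exact lt_irrefl _ h1
  have hmy : m < y := lt_of_le_of_ne hm.2 fun he => by rw [he] at h2; exact lt_irrefl _ h2
  exact ⟨m, by linarith, hmax.isLocalMax (Icc_mem_nhds hmu hmy)⟩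

lemma st9_localmin_exists {f : ℝ → ℝ} (hf : Continuous f)
    (h : ∀ a₀ : ℝ, ¬ MonotoneOn f (Set.Ici a₀) ∧ ¬ AntitoneOn f (Set.Ici a₀)) :
    ∀ a₀ : ℝ, ∃ m, a₀ ≤ m ∧ IsLocalMin f m := by
  intro a₀
  obtain ⟨x, y, hxa, hxy, hfxy⟩ := st9_notmono (h a₀).1
  obtain ⟨u, v, hyu, huv, hfuv⟩ := st9_notanti (h y).2
  have hxv : x ≤ v := by linarith
  obtain ⟨m, hm, hmin⟩ := (isCompact_Icc (a := x) (b := v)).exists_isMinOn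
    (Set.nonempty_Icc.2 hxv) hf.continuousOn
  have hy_mem : y ∈ Set.Icc x v := ⟨hxy.le, by linarith⟩
  have hu_mem : u ∈ Set.Icc x v := ⟨by linarith, huv.le⟩
  have h1 : f m < f x := lt_of_le_of_lt (hmin hy_mem) hfxy
  have h2 : f m < f v := lt_of_le_of_lt (hmin hu_mem) hfuv
  have hmx : x < m := lt_of_le_of_ne hm.1 fun he => by rw [← he] at h1; exact lt_irrefl _ h1
  have hmv : m < v := lt_of_le_of_ne hm.2 fun he => by rw [he] at h2; exact lt_irrefl _ h2
  exact ⟨m, by linarith, hmin.isLocalMin (Icc_mem_nhds hmx hmv)⟩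

lemma st9_unbounded_infinite {s : Set ℝ} (h : ∀ a₀ : ℝ, ∃ m, a₀ ≤ m ∧ m ∈ s) : s.Infinite := by
  intro hfin
  obtain ⟨M, hM⟩ := hfin.bddAbove
  obtain ⟨m, hm1, hm2⟩ := h (M + 1)
  have := hM hm2
  linarith

end Statement9Aux

/-- **Proposition 4.3.** If a bounded stationary process `ψ(a,ω) = ψ̄(τ_a ω)` is, with
positive probability, eventually monotone, then `ψ̄` is a.s. constant. Consequently, a
non-constant bounded stationary process oscillates infinitely often: it has infinitely
many local maxima and minima and (if C¹) infinitely many critical points, a.s. -/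
theorem statement9 {Ω : Type} [MetricSpace Ω] [MeasurableSpace Ω] [BorelSpace Ω]
    (S : RandomSetup Ω) (psib : Ω → ℝ)
    (hm : Measurable psib) (hbd : ∃ C : ℝ, ∀ ω, |psib ω| ≤ C)
    (hcont : ∀ᵐ ω ∂S.P, Continuous fun a : ℝ => psib (S.τ a ω)) :
    (0 < S.P {ω | ∃ a₀ : ℝ,
        MonotoneOn (fun a => psib (S.τ a ω)) (Set.Ici a₀) ∨
        AntitoneOn (fun a => psib (S.τ a ω)) (Set.Ici a₀)} →
      ∃ c : ℝ, ∀ᵐ ω ∂S.P, psib ω = c) ∧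
    ((¬ ∃ c : ℝ, ∀ᵐ ω ∂S.P, psib ω = c) →
      ∀ᵐ ω ∂S.P,
        {a : ℝ | IsLocalMax (fun a' => psib (S.τ a' ω)) a}.Infinite ∧
        {a : ℝ | IsLocalMin (fun a' => psib (S.τ a' ω)) a}.Infinite ∧
        (ContDiff ℝ 1 (fun a' : ℝ => psib (S.τ a' ω)) →
          {a : ℝ | deriv (fun a' => psib (S.τ a' ω)) a = 0}.Infinite)) := by
  haveI := S.prob
  haveI : Nonempty Ω := by
    rcases isEmpty_or_nonempty Ω with hΩ | hΩ
    · exfalso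
      have h1 : S.P Set.univ = 1 := measure_univ
      rw [Set.univ_eq_empty_iff.2 hΩ, measure_empty] at h1
      exact zero_ne_one h1
    · exact hΩ
  obtain ⟨ω₀⟩ := (inferInstance : Nonempty Ω)
  obtain ⟨C, hC⟩ := hbd
  have hCnn : 0 ≤ C := le_trans (abs_nonneg _) (hC ω₀)
  have part1 : 0 < S.P {ω | ∃ a₀ : ℝ,
      MonotoneOn (fun a => psib (S.τ a ω)) (Set.Ici a₀) ∨
      AntitoneOn (fun a => psib (S.τ a ω)) (Set.Ici a₀)} →
      ∃ c : ℝ, ∀ᵐ ω ∂S.P, psib ω = c := by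
    intro hpos
    have hshift : ∀ t : ℚ, ∀ᵐ ω ∂S.P, psib (S.τ (t : ℝ) ω) = psib ω := fun t =>
      st9_shift_ae S psib hm ⟨C, hC⟩ hcont hpos (t : ℝ)
    have horb : ∀ᵐ ω ∂S.P, ∀ a : ℝ, psib (S.τ a ω) = psib ω := by
      filter_upwards [(ae_all_iff).2 hshift, hcont] with ω h1 h2
      intro a
      have heq : (fun a : ℝ => psib (S.τ a ω)) = fun _ => psib ω := by
        apply Continuous.ext_on Rat.denseRange_cast h2 continuous_const
        rintro _ ⟨q, rfl⟩
        exact h1 q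
      exact congrFun heq a
    set Ψ := st9L S psib with hΨdef
    have hΨmeas : Measurable Ψ := st9L_meas S psib hm
    have hΨinv : ∀ b ω, Ψ (S.τ b ω) = Ψ ω := st9L_shift S psib hm hC
    have hΨbd : ∀ ω, -C ≤ Ψ ω ∧ Ψ ω ≤ C := by
      intro ω
      have habs : ∀ n : ℕ, |st9U S psib n ω| ≤ C := fun n => st9_absU_le S psib hm hC n ω
      have hbddle : IsBoundedUnder (· ≤ ·) atTop fun n => st9U S psib n ω :=
        isBoundedUnder_of ⟨C, fun n => (abs_le.1 (habs n)).2⟩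
      have hbddge : IsBoundedUnder (· ≥ ·) atTop fun n => st9U S psib n ω :=
        isBoundedUnder_of ⟨-C, fun n => (abs_le.1 (habs n)).1⟩
      constructor
      · calc -C ≤ liminf (fun n => st9U S psib n ω) atTop :=
              le_liminf_of_le hbddle.isCoboundedUnder_ge
                (Eventually.of_forall fun n => (abs_le.1 (habs n)).1)
          _ ≤ Ψ ω := liminf_le_limsup hbddle hbddge
      · exact limsup_le_of_le hbddge.isCoboundedUnder_le
          (Eventually.of_forall fun n => (abs_le.1 (habs n)).2)
    have hΨae : ∀ᵐ ω ∂S.P, Ψ ω = psib ω := by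
      filter_upwards [horb] with ω hω
      have hU : ∀ n : ℕ, st9U S psib n ω = psib ω := by
        intro n
        have hn : ((n : ℝ) + 1) ≠ 0 := by positivity
        rw [st9U, intervalIntegral.integral_congr (g := fun _ => psib ω) fun s _ => hω s,
          intervalIntegral.integral_const, smul_eq_mul, sub_zero, ← mul_assoc,
          inv_mul_cancel₀ hn, one_mul]
      show limsup (fun n => st9U S psib n ω) atTop = psib ω
      rw [show (fun n : ℕ => st9U S psib n ω) = fun _ => psib ω from funext hU, limsup_const]
    set SS := {r : ℝ | S.P (Ψ ⁻¹' Set.Iic r) = 1} with hSS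
    have hmemC : C ∈ SS := by
      have huniv : Ψ ⁻¹' Set.Iic C = Set.univ := Set.eq_univ_of_forall fun ω => (hΨbd ω).2
      show S.P (Ψ ⁻¹' Set.Iic C) = 1
      rw [huniv]
      exact measure_univ
    have hbddb : BddBelow SS := by
      refine ⟨-C - 1, fun r hr => ?_⟩
      by_contra hlt
      push_neg at hlt
      have hempty : Ψ ⁻¹' Set.Iic r = ∅ := by
        ext ω
        simp only [Set.mem_preimage, Set.mem_Iic, Set.mem_empty_iff_false, iff_false, not_le]
        have := (hΨbd ω).1
        linarith
      have hr1 : S.P (Ψ ⁻¹' Set.Iic r) = 1 := hr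
      rw [hempty, measure_empty] at hr1
      exact zero_ne_one hr1
    set c := sInf SS with hcdef
    have hms : ∀ r : ℝ, MeasurableSet (Ψ ⁻¹' Set.Iic r) := fun r => hΨmeas measurableSet_Iic
    have hinv : ∀ r a : ℝ, S.τ a ⁻¹' (Ψ ⁻¹' Set.Iic r) = Ψ ⁻¹' Set.Iic r := by
      intro r a
      ext ω
      simp only [Set.mem_preimage, Set.mem_Iic]
      rw [hΨinv]
    have h01 : ∀ r : ℝ, S.P (Ψ ⁻¹' Set.Iic r) = 0 ∨ S.P (Ψ ⁻¹' Set.Iic r) = 1 := fun r =>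
      S.ergodic _ (hms r) (hinv r)
    have claim1 : ∀ n : ℕ, ∀ᵐ ω ∂S.P, Ψ ω ≤ c + ((n : ℝ) + 1)⁻¹ := by
      intro n
      have hδ : 0 < ((n : ℝ) + 1)⁻¹ := by positivity
      obtain ⟨r, hrS, hrlt⟩ := (csInf_lt_iff hbddb ⟨C, hmemC⟩).1
        (by linarith : sInf SS < c + ((n : ℝ) + 1)⁻¹)
      have h1 : S.P (Ψ ⁻¹' Set.Iic (c + ((n : ℝ) + 1)⁻¹)) = 1 := by
        refine le_antisymm prob_le_one ?_
        calc (1:ℝ≥0∞) = S.P (Ψ ⁻¹' Set.Iic r) := hrS.symm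
          _ ≤ S.P (Ψ ⁻¹' Set.Iic (c + ((n : ℝ) + 1)⁻¹)) :=
              measure_mono (Set.preimage_mono (Set.Iic_subset_Iic.2 hrlt.le))
      have h0 : S.P (Ψ ⁻¹' Set.Iic (c + ((n : ℝ) + 1)⁻¹))ᶜ = 0 :=
        (prob_compl_eq_zero_iff (hms _)).2 h1
      rw [ae_iff]
      exact measure_mono_null (fun ω hω => hω) h0
    have claim2 : ∀ n : ℕ, ∀ᵐ ω ∂S.P, ¬ (Ψ ω ≤ c - ((n : ℝ) + 1)⁻¹) := by
      intro n
      have hδ : 0 < ((n : ℝ) + 1)⁻¹ := by positivity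
      have hr0 : S.P (Ψ ⁻¹' Set.Iic (c - ((n : ℝ) + 1)⁻¹)) = 0 := by
        rcases h01 (c - ((n : ℝ) + 1)⁻¹) with h | h
        · exact h
        · exfalso
          have hmem : c - ((n : ℝ) + 1)⁻¹ ∈ SS := h
          have := csInf_le hbddb hmem
          rw [← hcdef] at this
          linarith
      rw [ae_iff]
      exact measure_mono_null (fun ω hω => not_not.1 hω) hr0
    refine ⟨c, ?_⟩
    filter_upwards [ae_all_iff.2 claim1, ae_all_iff.2 claim2, hΨae] with ω h1 h2 hψ
    have hΨc : Ψ ω = c := by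
      refine le_antisymm ?_ ?_
      · by_contra hlt
        push_neg at hlt
        obtain ⟨n, hn⟩ := exists_nat_gt (Ψ ω - c)⁻¹
        have hpos2 : 0 < Ψ ω - c := by linarith
        have h3 : (Ψ ω - c)⁻¹ < (n : ℝ) + 1 := by linarith
        have k1 : (1:ℝ) < (Ψ ω - c) * ((n : ℝ) + 1) := by
          calc (1:ℝ) = (Ψ ω - c) * (Ψ ω - c)⁻¹ := (mul_inv_cancel₀ hpos2.ne').symm
            _ < (Ψ ω - c) * ((n : ℝ) + 1) := by
              exact mul_lt_mul_of_pos_left h3 hpos2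
        have k2 : ((n : ℝ) + 1)⁻¹ < Ψ ω - c := by
          rw [inv_eq_one_div, div_lt_iff₀ (by positivity)]
          linarith [k1]
        have := h1 n
        linarith
      · by_contra hlt
        push_neg at hlt
        obtain ⟨n, hn⟩ := exists_nat_gt (c - Ψ ω)⁻¹
        have hpos2 : 0 < c - Ψ ω := by linarith
        have h3 : (c - Ψ ω)⁻¹ < (n : ℝ) + 1 := by linarith
        have k1 : (1:ℝ) < (c - Ψ ω) * ((n : ℝ) + 1) := by
          calc (1:ℝ) = (c - Ψ ω) * (c - Ψ ω)⁻¹ := (mul_inv_cancel₀ hpos2.ne').symm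
            _ < (c - Ψ ω) * ((n : ℝ) + 1) := by
              exact mul_lt_mul_of_pos_left h3 hpos2
        have k2 : ((n : ℝ) + 1)⁻¹ < c - Ψ ω := by
          rw [inv_eq_one_div, div_lt_iff₀ (by positivity)]
          linarith [k1]
        exact h2 n (by linarith)
    rw [← hψ]
    exact hΨc
  refine ⟨part1, ?_⟩
  intro hnc
  have hA0 : S.P {ω | ∃ a₀ : ℝ,
      MonotoneOn (fun a => psib (S.τ a ω)) (Set.Ici a₀) ∨
      AntitoneOn (fun a => psib (S.τ a ω)) (Set.Ici a₀)} = 0 := by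
    by_contra hne
    exact hnc (part1 (pos_iff_ne_zero.2 hne))
  have hAe : ∀ᵐ ω ∂S.P, ¬ ∃ a₀ : ℝ,
      MonotoneOn (fun a => psib (S.τ a ω)) (Set.Ici a₀) ∨
      AntitoneOn (fun a => psib (S.τ a ω)) (Set.Ici a₀) := by
    rw [ae_iff]
    exact measure_mono_null (fun ω hω => not_not.1 hω) hA0
  filter_upwards [hcont, hAe] with ω hcω hnm
  push_neg at hnm
  have hno : ∀ a₀ : ℝ, ¬ MonotoneOn (fun a => psib (S.τ a ω)) (Set.Ici a₀) ∧
      ¬ AntitoneOn (fun a => psib (S.τ a ω)) (Set.Ici a₀) := by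
    intro a₀
    exact hnm a₀
  have hmax := st9_localmax_exists hcω hno
  have hmin := st9_localmin_exists hcω hno
  refine ⟨st9_unbounded_infinite fun a₀ => (hmax a₀).imp fun m hm => ⟨hm.1, hm.2⟩, ?_, ?_⟩
  · exact st9_unbounded_infinite fun a₀ => (hmin a₀).imp fun m hm => ⟨hm.1, hm.2⟩
  · intro _
    refine Set.Infinite.mono ?_
      (st9_unbounded_infinite fun a₀ => (hmax a₀).imp fun m hm => ⟨hm.1, hm.2⟩)
    intro a ha
    exact IsLocalMax.deriv_eq_zero ha
end
end
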